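/- Let (Σ, T) be a finite convergent length-reducing rewriting system with Σ = Σ^{-1} presenting a group G. Then the undirected Cayley graph Γ(G, Σ) is geodetic. -/

import Mathlib

/-- A graph is geodetic if between any two vertices there is a unique shortest walk
(equivalently, a unique shortest path). -/
def IsGeodetic {V : Type*} (G : SimpleGraph V) : Prop :=
  ∀ u v : V, ∃! p : G.Walk u v, ∀ q : G.Walk u v, p.length ≤ q.length

/-- `c : ZMod n → V` is an embedded circuit of length `n`: the vertices are distinct and
cyclically consecutive vertices are adjacent. -/
def IsEmbCircuit {V : Type*} (G : SimpleGraph V) (n : ℕ) (c : ZMod n → V) : Prop :=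
  2 ≤ n ∧ Function.Injective c ∧ ∀ i : ZMod n, G.Adj (c i) (c (i + 1))

/-- An embedded circuit is isometrically embedded if the graph distance between any two of its
vertices equals the cyclic distance `min {j-i, n+i-j}` along the circuit. -/
def IsIEC {V : Type*} (G : SimpleGraph V) (n : ℕ) (c : ZMod n → V) : Prop :=
  IsEmbCircuit G n c ∧ ∀ i j : ZMod n, G.dist (c i) (c j) = min (j - i).val (i - j).val

/-- One-step rewriting: replace a factor which is a left-hand side of a rule. -/
def RWStep {α : Type*} (T : Set (FreeMonoid α × FreeMonoid α)) (u v : FreeMonoid α) : Prop :=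
  ∃ x y l r, (l, r) ∈ T ∧ u = x * l * y ∧ v = x * r * y

/-- Reflexive-transitive closure of one-step rewriting. -/
def RWReduces {α : Type*} (T : Set (FreeMonoid α × FreeMonoid α)) :
    FreeMonoid α → FreeMonoid α → Prop :=
  Relation.ReflTransGen (RWStep T)

/-- Terminating: no infinite chain of immediate reductions. -/
def RWTerminating {α : Type*} (T : Set (FreeMonoid α × FreeMonoid α)) : Prop :=
  ¬ ∃ f : ℕ → FreeMonoid α, ∀ n : ℕ, RWStep T (f n) (f (n + 1))

/-- Confluent rewriting system. -/
def RWConfluent {α : Type*} (T : Set (FreeMonoid α × FreeMonoid α)) : Prop :=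
  ∀ w x y, RWReduces T w x → RWReduces T w y →
    ∃ z, RWReduces T x z ∧ RWReduces T y z

/-- Length-reducing: every rule strictly decreases length. -/
def RWLengthReducing {α : Type*} (T : Set (FreeMonoid α × FreeMonoid α)) : Prop :=
  ∀ p ∈ T, (Prod.snd p).length < (Prod.fst p).length

/-- A word is irreducible if no rewriting step applies to it. -/
def RWIrreducible {α : Type*} (T : Set (FreeMonoid α × FreeMonoid α)) (u : FreeMonoid α) : Prop :=
  ∀ v, ¬ RWStep T u v

/-- The congruence on `Σ*` generated by the rewriting rules. -/
def RWCon {α : Type*} (T : Set (FreeMonoid α × FreeMonoid α)) : Con (FreeMonoid α) :=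
  conGen (RWStep T)

/-- The monoid presented by the rewriting system `(Σ, T)`. -/
abbrev RWMonoid {α : Type*} (T : Set (FreeMonoid α × FreeMonoid α)) :=
  (RWCon T).Quotient

/-- The class of a word in the presented monoid. -/
def RWclass {α : Type*} (T : Set (FreeMonoid α × FreeMonoid α)) (w : FreeMonoid α) :
    RWMonoid T :=
  Con.mk' (RWCon T) w

/-- The undirected Cayley graph of a group `G` with respect to a set `S`:
distinct `g, h` are adjacent iff `g⁻¹ * h ∈ S ∪ S⁻¹`. -/
def CayleyGraph (G : Type*) [Group G] (S : Set G) : SimpleGraph G where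
  Adj g h := g ≠ h ∧ g⁻¹ * h ∈ S ∪ S⁻¹
  symm := ⟨by
    rintro g h ⟨hne, hm⟩
    refine ⟨hne.symm, ?_⟩
    have h2 : (g⁻¹ * h)⁻¹ ∈ S ∪ S⁻¹ := by
      rcases hm with hm | hm
      · exact Or.inr (by simpa using hm)
      · exact Or.inl (by simpa using hm)
    simpa [mul_inv_rev] using h2⟩
  loopless := ⟨fun g hg => hg.1 rfl⟩

namespace Stmt16Aux

open SimpleGraph

/-- Walks in a simple graph are determined by their support. -/
lemma walk_support_inj {V : Type*} {G : SimpleGraph V} :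
    ∀ {u v : V} (p q : G.Walk u v), p.support = q.support → p = q := by
  intro u v p
  induction p with
  | nil =>
    intro q h
    cases q with
    | nil => rfl
    | cons h' q' =>
      exfalso
      have := congrArg List.length h
      simp [Walk.support_cons] at this
  | cons h p ih =>
    intro q hq
    cases q with
    | nil =>
      exfalso
      have := congrArg List.length hq
      simp [Walk.support_cons] at this
    | cons h' q' =>
      rw [Walk.support_cons, Walk.support_cons] at hq
      have htail := (List.cons.injEq _ _ _ _ ▸ hq).2
      have hhead := congrArg List.head? htail
      rw [Walk.support_eq_cons p, Walk.support_eq_cons q'] at hhead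
      simp only [List.head?_cons, Option.some.injEq] at hhead
      subst hhead
      rw [ih q' htail]

/-- Trace of a word starting at `g`. -/
def trace {A G : Type*} [Mul G] (f : A → G) : G → List A → List G
  | g, [] => [g]
  | g, a :: l => g :: trace f (g * f a) l

lemma walk_of_word {A : Type*} {G : Type*} [Group G] (f : A → G) :
    ∀ (w : List A) (g h : G), h = g * (w.map f).prod →
      ∃ p : (CayleyGraph G (Set.range f)).Walk g h, p.length ≤ w.length := by
  intro w
  induction w with
  | nil =>
    intro g h hEq
    have : g = h := by simpa using hEq.symm
    subst this
    exact ⟨Walk.nil, by simp⟩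
  | cons a t ih =>
    intro g h hEq
    have hEq' : h = (g * f a) * (t.map f).prod := by
      simpa [mul_assoc] using hEq
    obtain ⟨p, hp⟩ := ih (g * f a) h hEq'
    by_cases hg : g = g * f a
    · exact ⟨p.copy hg.symm rfl, by simpa using hp.trans (Nat.le_succ _)⟩
    · have hadj : (CayleyGraph G (Set.range f)).Adj g (g * f a) :=
        show g ≠ g * f a ∧ g⁻¹ * (g * f a) ∈ Set.range f ∪ (Set.range f)⁻¹ from ⟨hg, Or.inl ⟨a, by group⟩⟩
      exact ⟨Walk.cons hadj p, by simpa using Nat.succ_le_succ hp⟩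

lemma word_of_walk {A : Type*} {G : Type*} [Group G] (f : A → G)
    (hS : ∀ s : G, s ∈ (Set.range f)⁻¹ → s ∈ Set.range f) :
    ∀ {g h : G} (p : (CayleyGraph G (Set.range f)).Walk g h),
      ∃ w : List A, w.length = p.length ∧ g * (w.map f).prod = h ∧
        p.support = trace f g w := by
  intro g h p
  induction p with
  | nil => exact ⟨[], by simp [trace]⟩
  | @cons g b h hadj p ih =>
    obtain ⟨w, hlen, hprod, hsupp⟩ := ih
    have hmem : g⁻¹ * b ∈ Set.range f := by
      rcases (show g ≠ b ∧ g⁻¹ * b ∈ Set.range f ∪ (Set.range f)⁻¹ from hadj).2 with hm | hm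
      · exact hm
      · exact hS _ hm
    obtain ⟨a, ha⟩ := hmem
    have hb : g * f a = b := by rw [ha]; group
    refine ⟨a :: w, by simp [hlen], ?_, ?_⟩
    · simp only [List.map_cons, List.prod_cons, ← mul_assoc, hb, hprod]
    · simp only [Walk.support_cons, trace, hb, hsupp]

section RW
variable {α : Type*} {T : Set (FreeMonoid α × FreeMonoid α)}

lemma step_mul {u v : FreeMonoid α} (x y : FreeMonoid α) (h : RWStep T u v) :
    RWStep T (x * u * y) (x * v * y) := by
  obtain ⟨x', y', l, r, hT, hu, hv⟩ := h
  exact ⟨x * x', y' * y, l, r, hT, by rw [hu]; group, by rw [hv]; group⟩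

lemma reduces_mul {u v : FreeMonoid α} (x y : FreeMonoid α) (h : RWReduces T u v) :
    RWReduces T (x * u * y) (x * v * y) :=
  Relation.ReflTransGen.lift (fun w => x * w * y) (fun _ _ h => step_mul x y h) _ _ h

/-- Joinability. -/
def Jrel (T : Set (FreeMonoid α × FreeMonoid α)) (u v : FreeMonoid α) : Prop :=
  ∃ z, RWReduces T u z ∧ RWReduces T v z

lemma Jcon (hconf : RWConfluent T) : ∃ c : Con (FreeMonoid α), c.r = Jrel T := by
  refine ⟨⟨⟨Jrel T, ⟨fun u => ⟨u, .refl, .refl⟩, ?_, ?_⟩⟩, ?_⟩, rfl⟩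
  · rintro u v ⟨z, h1, h2⟩; exact ⟨z, h2, h1⟩
  · rintro u v w ⟨z1, hu, hv⟩ ⟨z2, hv', hw⟩
    obtain ⟨z, h1, h2⟩ := hconf v z1 z2 hv hv'
    exact ⟨z, hu.trans h1, hw.trans h2⟩
  · rintro a b c d ⟨z1, ha, hb⟩ ⟨z2, hc, hd⟩
    refine ⟨z1 * z2, ?_, ?_⟩
    · have s1 : RWReduces T (a * c) (z1 * c) := by
        simpa using reduces_mul 1 c ha
      have s2 : RWReduces T (z1 * c) (z1 * z2) := by
        simpa [mul_assoc] using reduces_mul z1 1 hc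
      exact s1.trans s2
    · have s1 : RWReduces T (b * d) (z1 * d) := by
        simpa using reduces_mul 1 d hb
      have s2 : RWReduces T (z1 * d) (z1 * z2) := by
        simpa [mul_assoc] using reduces_mul z1 1 hd
      exact s1.trans s2

lemma irred_reduces {u z : FreeMonoid α} (hu : RWIrreducible T u)
    (h : RWReduces T u z) : u = z := by
  rcases Relation.ReflTransGen.cases_head h with rfl | ⟨b, hb, _⟩
  · rfl
  · exact absurd hb (hu b)

lemma irred_unique (hconf : RWConfluent T) {u v : FreeMonoid α}
    (hu : RWIrreducible T u) (hv : RWIrreducible T v) (h : RWCon T u v) : u = v := by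
  obtain ⟨c, hc⟩ := Jcon (T := T) hconf
  have hle : RWCon T ≤ c := Con.conGen_le.2 (fun x y hxy => by
    show c.r x y
    rw [hc]; exact ⟨y, Relation.ReflTransGen.single hxy, .refl⟩)
  have : Jrel T u v := by rw [← hc]; exact hle h
  obtain ⟨z, h1, h2⟩ := this
  rw [irred_reduces hu h1, irred_reduces hv h2]

end RW

end Stmt16Aux

theorem stmt16 {A : Type} [Fintype A] (T : Set (FreeMonoid A × FreeMonoid A))
    (hT : T.Finite) (hterm : RWTerminating T) (hconf : RWConfluent T)
    (hlr : RWLengthReducing T) (G : Type*) [Group G] (e : RWMonoid T ≃* G)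
    (hinv : ∀ a : A, ∃ b : A,
      e (RWclass T (FreeMonoid.of b)) = (e (RWclass T (FreeMonoid.of a)))⁻¹) :
    IsGeodetic (CayleyGraph G (Set.range fun a : A => e (RWclass T (FreeMonoid.of a)))) := by
  classical
  set f : A → G := fun a => e (RWclass T (FreeMonoid.of a)) with hf
  set Γ := CayleyGraph G (Set.range f) with hΓ
  -- inverse closure
  have hS : ∀ s : G, s ∈ (Set.range f)⁻¹ → s ∈ Set.range f := by
    rintro s ⟨a, ha⟩
    obtain ⟨b, hb⟩ := hinv a
    have ha' : e (RWclass T (FreeMonoid.of a)) = s⁻¹ := ha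
    refine ⟨b, ?_⟩
    show e (RWclass T (FreeMonoid.of b)) = s
    rw [hb, ha']; group
  -- products of letters compute classes
  have hprod : ∀ l : List A, (l.map f).prod = e (RWclass T (FreeMonoid.ofList l)) := by
    intro l
    induction l with
    | nil => simp [RWclass]
    | cons a t ih =>
      rw [List.map_cons, List.prod_cons, ih, FreeMonoid.ofList_cons]
      show f a * _ = _
      rw [hf]
      rw [show RWclass T (FreeMonoid.of a * FreeMonoid.ofList t)
            = RWclass T (FreeMonoid.of a) * RWclass T (FreeMonoid.ofList t) from
          map_mul (Con.mk' (RWCon T)) _ _, map_mul]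
  -- existence of a walk between any two vertices
  intro u v
  obtain ⟨w₀, hw₀⟩ := Con.mk'_surjective (c := RWCon T) (e.symm (u⁻¹ * v))
  have hreach : Γ.Reachable u v := by
    have : e (RWclass T w₀) = u⁻¹ * v := by
      rw [RWclass, hw₀]; simp
    obtain ⟨p, -⟩ := Stmt16Aux.walk_of_word f (FreeMonoid.toList w₀) u v (by
      rw [hprod, show FreeMonoid.ofList (FreeMonoid.toList w₀) = w₀ from rfl, this]; group)
    exact ⟨p⟩
  obtain ⟨p₀, hp₀⟩ := hreach.exists_walk_length_eq_dist
  -- any walk of minimal length yields an irreducible word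
  have key : ∀ p : Γ.Walk u v, p.length = Γ.dist u v → ∃ w : List A,
      p.support = Stmt16Aux.trace f u w ∧
      e (RWclass T (FreeMonoid.ofList w)) = u⁻¹ * v ∧
      RWIrreducible T (FreeMonoid.ofList w) := by
    intro p hp
    obtain ⟨w, hlen, hw, hsupp⟩ := Stmt16Aux.word_of_walk f hS p
    have hcls : e (RWclass T (FreeMonoid.ofList w)) = u⁻¹ * v := by
      rw [← hprod, ← hw]; group
    refine ⟨w, hsupp, hcls, ?_⟩
    intro w' hstep
    -- w' is a shorter word in the same class; build a shorter walk
    have hsame : RWclass T (FreeMonoid.ofList w) = RWclass T w' :=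
      (Con.eq _).2 (ConGen.Rel.of _ _ hstep)
    have hcls' : e (RWclass T w') = u⁻¹ * v := by rw [← hsame]; exact hcls
    have hshort : FreeMonoid.length w' < w.length := by
      obtain ⟨x, y, l, r, hlr', hu', hv'⟩ := hstep
      have : FreeMonoid.length (FreeMonoid.ofList w) = w.length := rfl
      rw [← this, hu', hv']
      simp only [FreeMonoid.length_mul]
      have hlen2 : r.length < l.length := hlr (l, r) hlr'
      omega
    obtain ⟨q, hq⟩ := Stmt16Aux.walk_of_word f (FreeMonoid.toList w') u v (by
      rw [hprod, show FreeMonoid.ofList (FreeMonoid.toList w') = w' from rfl, hcls']; group)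
    have hd : Γ.dist u v ≤ q.length := SimpleGraph.dist_le q
    have : (FreeMonoid.toList w').length = FreeMonoid.length w' := rfl
    omega
  refine ⟨p₀, fun q => hp₀ ▸ SimpleGraph.dist_le q, ?_⟩
  intro q hq
  -- q also has minimal length
  have hqlen : q.length = Γ.dist u v :=
    le_antisymm (hp₀ ▸ hq p₀) (SimpleGraph.dist_le q)
  obtain ⟨wq, hsq, hcq, hiq⟩ := key q hqlen
  obtain ⟨wp, hsp, hcp, hip⟩ := key p₀ hp₀
  have : FreeMonoid.ofList wq = FreeMonoid.ofList wp := by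
    refine Stmt16Aux.irred_unique hconf hiq hip ?_
    exact (Con.eq _).1 (e.injective (hcq.trans hcp.symm))
  have hw : wq = wp := FreeMonoid.ofList.injective this
  exact Stmt16Aux.walk_support_inj q p₀ (by rw [hsq, hsp, hw])
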